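/- Let n ≥ 1 and let x_1 ≤ x_2 ≤ … ≤ x_{n+1} be real numbers. Then ∫_{W^{n,n+1}(x)} ∏_{1≤i<j≤n} (y_j - y_i) dy_1⋯dy_n = (1/n!) ∏_{1≤i<j≤n+1} (x_j - x_i). (This is the identity h_{n+1} = Λ_{n,n+1} h_n for the Vandermonde determinant, used in the paper's construction of Dyson Brownian motion from reflected Brownian motions.) -/

import Mathlib

open MeasureTheory

/-- Reindexing `∏_{i<j}` products. -/
lemma prod_Iio_eq_prod_Ioi {n : ℕ} (y : Fin n → ℝ) :
    ∏ j : Fin n, ∏ i ∈ Finset.Iio j, (y j - y i)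
      = ∏ i : Fin n, ∏ j ∈ Finset.Ioi i, (y j - y i) := by
  exact Finset.prod_comm' (by simp)

/-- Integral over a box of a product of single-variable functions. -/
lemma integral_pi_prod {n : ℕ} (s : Fin n → Set ℝ) (hs : ∀ i, MeasurableSet (s i))
    (g : Fin n → ℝ → ℝ) :
    ∫ y in Set.univ.pi s, ∏ i, g i (y i) = ∏ i, ∫ t in s i, g i t := by
  rw [← integral_indicator (MeasurableSet.univ_pi hs)]
  have h : ∀ y : Fin n → ℝ, (Set.univ.pi s).indicator (fun y => ∏ i, g i (y i)) y
      = ∏ i, (s i).indicator (g i) (y i) := by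
    intro y
    by_cases hy : y ∈ Set.univ.pi s
    · rw [Set.indicator_of_mem hy]
      exact Finset.prod_congr rfl fun i _ =>
        (Set.indicator_of_mem (hy i (Set.mem_univ i)) _).symm
    · rw [Set.indicator_of_notMem hy]
      rw [Set.mem_univ_pi] at hy; push_neg at hy
      obtain ⟨i, hi⟩ := hy
      exact (Finset.prod_eq_zero (Finset.mem_univ i) (Set.indicator_of_notMem hi _)).symm
  simp_rw [h]
  rw [volume_pi, MeasureTheory.integral_fintype_prod_eq_prod (ι := Fin n)
    (f := fun i => (s i).indicator (g i))]
  exact Finset.prod_congr rfl fun i _ => integral_indicator (hs i)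

/-- The determinant of successive differences equals the Vandermonde determinant. -/
lemma det_diff_eq {n : ℕ} (x : Fin (n + 1) → ℝ) :
    (Matrix.of fun i j : Fin n =>
        x i.succ ^ ((j : ℕ) + 1) - x i.castSucc ^ ((j : ℕ) + 1)).det
      = (Matrix.vandermonde x).det := by
  set B : Matrix (Fin (n + 1)) (Fin (n + 1)) ℝ :=
    Matrix.of (fun i j => Fin.cases (x 0 ^ (j : ℕ))
      (fun i' : Fin n => x i'.succ ^ (j : ℕ) - x i'.castSucc ^ (j : ℕ)) i) with hB
  have h1 : (Matrix.vandermonde x).det = B.det := by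
    apply Matrix.det_eq_of_forall_row_eq_smul_add_pred (fun _ => (1 : ℝ))
    · intro j; simp [hB, Matrix.vandermonde]
    · intro i j; simp [hB, Matrix.vandermonde]
  rw [h1, Matrix.det_succ_column_zero]
  rw [Finset.sum_eq_single (0 : Fin (n + 1))]
  · have hsub : B.submatrix (Fin.succAbove 0) Fin.succ
        = Matrix.of (fun i j : Fin n =>
            x i.succ ^ ((j : ℕ) + 1) - x i.castSucc ^ ((j : ℕ) + 1)) := by
      ext i j
      simp [hB, Fin.zero_succAbove, Matrix.submatrix]
    rw [hsub]
    simp [hB]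
  · intro i _ hi
    obtain ⟨i', rfl⟩ := Fin.exists_succ_eq.mpr hi
    simp [hB]
  · simp

/-- The Vandermonde identity `h_{n+1} = Λ_{n,n+1} h_n`:
`∫_{W^{n,n+1}(x)} ∏_{1≤i<j≤n} (y_j - y_i) dy = (1/n!) ∏_{1≤i<j≤n+1} (x_j - x_i)`. -/
theorem vandermonde_interlacing_integral (n : ℕ) (hn : 1 ≤ n)
    (x : Fin (n + 1) → ℝ) (hx : Monotone x) :
    ∫ y in Set.univ.pi (fun j : Fin n => Set.Icc (x j.castSucc) (x j.succ)),
        ∏ j : Fin n, ∏ i ∈ Finset.Iio j, (y j - y i)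
      = (1 / (Nat.factorial n : ℝ)) *
          ∏ j : Fin (n + 1), ∏ i ∈ Finset.Iio j, (x j - x i) := by
  set S : Set (Fin n → ℝ) := Set.univ.pi (fun j : Fin n => Set.Icc (x j.castSucc) (x j.succ))
    with hS
  have hScompact : IsCompact S := isCompact_univ_pi (fun i => isCompact_Icc)
  -- Step 1: rewrite the integrand as a sum over permutations
  have key : ∀ y : Fin n → ℝ, ∏ j : Fin n, ∏ i ∈ Finset.Iio j, (y j - y i)
      = ∑ σ : Equiv.Perm (Fin n),
          ((Equiv.Perm.sign σ : ℤ) : ℝ) * ∏ i : Fin n, y i ^ (σ i : ℕ) := by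
    intro y
    rw [prod_Iio_eq_prod_Ioi, ← Matrix.det_vandermonde, ← Matrix.det_transpose,
      Matrix.det_apply']
    simp [Matrix.vandermonde]
  simp_rw [key]
  -- Step 2: swap integral and sum
  rw [integral_finset_sum _ (fun σ _ => by
    exact (continuous_const.mul (continuous_finset_prod _ fun i _ =>
      (continuous_apply i).pow _)).continuousOn.integrableOn_compact hScompact)]
  -- Step 3: compute each term
  have hterm : ∀ σ : Equiv.Perm (Fin n),
      ∫ y in S, ((Equiv.Perm.sign σ : ℤ) : ℝ) * ∏ i : Fin n, y i ^ (σ i : ℕ)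
        = ((Equiv.Perm.sign σ : ℤ) : ℝ) * (1 / (Nat.factorial n : ℝ)) *
            ∏ i : Fin n, (x i.succ ^ ((σ i : ℕ) + 1) - x i.castSucc ^ ((σ i : ℕ) + 1)) := by
    intro σ
    rw [MeasureTheory.integral_const_mul, hS,
      integral_pi_prod _ (fun i => measurableSet_Icc) (fun i t => t ^ (σ i : ℕ))]
    have h1 : ∀ i : Fin n, ∫ t in Set.Icc (x i.castSucc) (x i.succ), t ^ (σ i : ℕ)
        = (x i.succ ^ ((σ i : ℕ) + 1) - x i.castSucc ^ ((σ i : ℕ) + 1)) /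
            (((σ i : ℕ) : ℝ) + 1) := by
      intro i
      rw [MeasureTheory.integral_Icc_eq_integral_Ioc,
        ← intervalIntegral.integral_of_le (hx (Fin.castSucc_lt_succ (i := i)).le)]
      exact integral_pow _
    simp_rw [h1]
    rw [Finset.prod_div_distrib]
    have h2 : ∏ i : Fin n, (((σ i : ℕ) : ℝ) + 1) = (Nat.factorial n : ℝ) := by
      have := Equiv.prod_comp σ (fun i : Fin n => ((i : ℕ) : ℝ) + 1)
      rw [this]
      rw [show ∏ i : Fin n, (((i : ℕ) : ℝ) + 1)
          = ((∏ i : Fin n, ((i : ℕ) + 1) : ℕ) : ℝ) by push_cast; exact Finset.prod_congr rfl fun i _ => by ring]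
      rw [Fin.prod_univ_eq_prod_range (fun k => k + 1), Finset.prod_range_add_one_eq_factorial]
    rw [h2]
    ring
  simp_rw [hterm]
  -- Step 4: identify the sum as a determinant
  have h3 : ∑ σ : Equiv.Perm (Fin n), ((Equiv.Perm.sign σ : ℤ) : ℝ) *
        (1 / (Nat.factorial n : ℝ)) *
        ∏ i : Fin n, (x i.succ ^ ((σ i : ℕ) + 1) - x i.castSucc ^ ((σ i : ℕ) + 1))
      = (1 / (Nat.factorial n : ℝ)) *
        ∑ σ : Equiv.Perm (Fin n), ((Equiv.Perm.sign σ : ℤ) : ℝ) *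
        ∏ i : Fin n, (x i.succ ^ ((σ i : ℕ) + 1) - x i.castSucc ^ ((σ i : ℕ) + 1)) := by
    rw [Finset.mul_sum]; exact Finset.sum_congr rfl fun σ _ => by ring
  rw [h3]
  congr 1
  have h4 : ∑ σ : Equiv.Perm (Fin n), ((Equiv.Perm.sign σ : ℤ) : ℝ) *
        ∏ i : Fin n, (x i.succ ^ ((σ i : ℕ) + 1) - x i.castSucc ^ ((σ i : ℕ) + 1))
      = (Matrix.of fun i j : Fin n =>
          x i.succ ^ ((j : ℕ) + 1) - x i.castSucc ^ ((j : ℕ) + 1)).det := by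
    rw [← Matrix.det_transpose, Matrix.det_apply']
    rfl
  rw [h4, det_diff_eq, Matrix.det_vandermonde, ← prod_Iio_eq_prod_Ioi]
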